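/- Let (b_1,...,b_k) and (c_1,...,c_l) be linear-dual strings with k + l ≥ 2, let x ≥ 1 be an integer, and let [b_1,...,b_k] = p/q in lowest terms. Then the Hirzebruch–Jung continued fractions satisfy [b_1,...,b_k, x+1, c_l,...,c_1] = (x p²)/(x p q + 1) and [c_1,...,c_l, x+1, b_k,...,b_1] = (x p²)/(x p² - x p q + 1). -/

import Mathlib

/-- Numerator and denominator of the Hirzebruch–Jung continued fraction
`[a_1,...,a_n] = a_1 - 1/(a_2 - 1/(⋯ - 1/a_n))`; the empty fraction is `1/0`. -/
def hj : List ℕ → ℤ × ℤ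
  | [] => (1, 0)
  | a :: l => ((a : ℤ) * (hj l).1 - (hj l).2, (hj l).1)

def hjNum (l : List ℕ) : ℤ := (hj l).1

def hjDen (l : List ℕ) : ℤ := (hj l).2

/-- `(b_1,...,b_k)` and `(c_1,...,c_l)` are linear-dual strings: both consist of
integers `≥ 2`, and if `[b_1,...,b_k] = p/q` then `[c_1,...,c_l] = p/(p-q)`
(Riemenschneider duality, equivalent to the `2^{[m]}/3+n` normal-form description). -/
def IsLinearDual (b c : List ℕ) : Prop :=
  (∀ x ∈ b, 2 ≤ x) ∧ (∀ x ∈ c, 2 ≤ x) ∧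
    hjNum c = hjNum b ∧ hjDen b + hjDen c = hjNum b

/-- Second column of the continuant matrix. -/
def hj' : List ℕ → ℤ × ℤ
  | [] => (0, 1)
  | a :: l => ((a : ℤ) * (hj' l).1 - (hj' l).2, (hj' l).1)

lemma hj_append (l m : List ℕ) :
    hj (l ++ m) = ((hj l).1 * (hj m).1 + (hj' l).1 * (hj m).2,
      (hj l).2 * (hj m).1 + (hj' l).2 * (hj m).2) := by
  induction l with
  | nil => simp [hj, hj']
  | cons a l ih =>
    simp only [List.cons_append, List.append_eq, hj, hj', ih, Prod.mk.injEq]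
    exact ⟨by ring, trivial⟩

lemma hj'_append (l m : List ℕ) :
    hj' (l ++ m) = ((hj l).1 * (hj' m).1 + (hj' l).1 * (hj' m).2,
      (hj l).2 * (hj' m).1 + (hj' l).2 * (hj' m).2) := by
  induction l with
  | nil => simp [hj, hj']
  | cons a l ih =>
    simp only [List.cons_append, List.append_eq, hj, hj', ih, Prod.mk.injEq]
    exact ⟨by ring, trivial⟩

lemma hj_det (l : List ℕ) : (hj l).1 * (hj' l).2 - (hj' l).1 * (hj l).2 = 1 := by
  induction l with
  | nil => simp [hj, hj']
  | cons a l ih =>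
    simp only [hj, hj']
    nlinarith [ih]

lemma hj_rev_aux (l : List ℕ) :
    hj l.reverse = ((hj l).1, -(hj' l).1) ∧ hj' l.reverse = (-(hj l).2, (hj' l).2) := by
  induction l with
  | nil => simp [hj, hj']
  | cons a l ih =>
    obtain ⟨ih1, ih2⟩ := ih
    simp only [List.reverse_cons, hj_append, hj'_append, ih1, ih2, hj, hj', Prod.mk.injEq]
    refine ⟨⟨by ring, by ring⟩, ⟨by ring, by ring⟩⟩

lemma hj_rev (l : List ℕ) : hj l.reverse = ((hj l).1, -(hj' l).1) := (hj_rev_aux l).1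

lemma hj_bounds (l : List ℕ) (h : ∀ y ∈ l, 2 ≤ y) :
    0 ≤ (hj l).2 ∧ (hj l).2 < (hj l).1 := by
  induction l with
  | nil => simp [hj]
  | cons a l ih =>
    have ha : (2 : ℤ) ≤ (a : ℤ) := by exact_mod_cast h a (by simp)
    obtain ⟨h1, h2⟩ := ih (fun y hy => h y (by simp [hy]))
    simp only [hj]
    constructor
    · linarith
    · nlinarith

lemma hj_den_pos (l : List ℕ) (hne : l ≠ []) (h : ∀ y ∈ l, 2 ≤ y) :
    1 ≤ (hj l).2 := by
  cases l with
  | nil => exact absurd rfl hne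
  | cons a l =>
    obtain ⟨h1, h2⟩ := hj_bounds l (fun y hy => h y (by simp [hy]))
    simp only [hj]
    linarith

/-- If `(b_1,...,b_k)` and `(c_1,...,c_l)` are linear-dual with `k + l ≥ 2`, `x ≥ 1`,
and `[b_1,...,b_k] = p/q`, then `[b_1,...,b_k, x+1, c_l,...,c_1] = xp²/(xpq+1)` and
`[c_1,...,c_l, x+1, b_k,...,b_1] = xp²/(xp² - xpq + 1)`. -/
theorem contfrac_linear_dual_formulas (b c : List ℕ) (h : IsLinearDual b c)
    (hlen : 2 ≤ b.length + c.length) (x : ℕ) (hx : 1 ≤ x) :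
    hjNum (b ++ [x + 1] ++ c.reverse) = (x : ℤ) * hjNum b ^ 2 ∧
    hjDen (b ++ [x + 1] ++ c.reverse) = (x : ℤ) * hjNum b * hjDen b + 1 ∧
    hjNum (c ++ [x + 1] ++ b.reverse) = (x : ℤ) * hjNum b ^ 2 ∧
    hjDen (c ++ [x + 1] ++ b.reverse) =
      (x : ℤ) * hjNum b ^ 2 - (x : ℤ) * hjNum b * hjDen b + 1 := by
  obtain ⟨hb, hc, hnum, hden⟩ := h
  simp only [hjNum, hjDen] at hnum hden ⊢
  obtain ⟨hb0, hb1⟩ := hj_bounds b hb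
  obtain ⟨hc0, hc1⟩ := hj_bounds c hc
  -- both b and c are nonempty
  have hbne : b ≠ [] := by
    rintro rfl
    simp [hj] at hnum hden
    omega
  have hcne : c ≠ [] := by
    rintro rfl
    simp [hj] at hnum hden
    omega
  set p := (hj b).1 with hp
  set q := (hj b).2 with hq
  set B := (hj' b).1 with hB
  set B' := (hj' b).2 with hB'
  set C := (hj' c).1 with hC
  set C' := (hj' c).2 with hC'
  have detb : p * B' - B * q = 1 := hj_det b
  have detc : p * C' - C * (p - q) = 1 := by
    have := hj_det c
    rw [hnum] at this
    have hdc : (hj c).2 = p - q := by omega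
    rw [hdc] at this
    exact this
  -- bounds on -B and -C
  have hrb := hj_rev b
  have hrc := hj_rev c
  have hbbound : 1 ≤ -B ∧ -B < p := by
    have h1 := hj_den_pos b.reverse (by simpa using hbne) (fun y hy => hb y (by simpa using hy))
    have h2 := (hj_bounds b.reverse (fun y hy => hb y (by simpa using hy))).2
    rw [hrb] at h1 h2
    exact ⟨h1, h2⟩
  have hcbound : 1 ≤ -C ∧ -C < p := by
    have h1 := hj_den_pos c.reverse (by simpa using hcne) (fun y hy => hc y (by simpa using hy))
    have h2 := (hj_bounds c.reverse (fun y hy => hc y (by simpa using hy))).2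
    rw [hrc, hnum] at h1 h2
    exact ⟨h1, h2⟩
  -- key identity: B + C = -p
  have hkey : B + C = -p := by
    have hdvd : p ∣ (-B - C) * q := ⟨-B' - C + C', by linarith [detb, detc, mul_comm C q]⟩
    have hcop : IsCoprime p q := ⟨B', -B, by linarith [detb]⟩
    obtain ⟨k, hk⟩ := hcop.dvd_of_dvd_mul_right hdvd
    have hppos : 0 < p := by linarith [hbbound.1, hbbound.2]
    have hk1 : 1 ≤ k := by nlinarith [hbbound.1, hcbound.1]
    have hk2 : k ≤ 1 := by nlinarith [hbbound.2, hcbound.2]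
    have : k = 1 := le_antisymm hk2 hk1
    rw [this, mul_one] at hk
    linarith
  -- compute the four quantities
  have e1 : b ++ [x + 1] ++ c.reverse = b ++ ((x + 1) :: c.reverse) := by simp
  have e2 : c ++ [x + 1] ++ b.reverse = c ++ ((x + 1) :: b.reverse) := by simp
  have hm1 : hj ((x + 1) :: c.reverse) = (((x : ℤ) + 1) * p + C, p) := by
    simp only [hj, hrc, hnum, ← hC, Prod.mk.injEq]
    push_cast
    exact ⟨by ring, trivial⟩
  have hm2 : hj ((x + 1) :: b.reverse) = (((x : ℤ) + 1) * p + B, p) := by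
    simp only [hj, hrb, ← hB, ← hp, Prod.mk.injEq]
    push_cast
    exact ⟨by ring, trivial⟩
  have hdc : (hj c).2 = p - q := by omega
  rw [e1, e2, hj_append, hj_append, hm1, hm2, hnum, hdc]
  refine ⟨by linear_combination (p : ℤ) * hkey,
    by linear_combination q * hkey + detb,
    by linear_combination (p : ℤ) * hkey,
    by linear_combination (p - q) * hkey + detc⟩
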